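/- Let n be even and let φ be a polynomial of degree ≤ n+1 satisfying φ(z) − φ(z+1) = (2z+1)ⁿ(−φ((z+1)/(2z+1)) + φ(z/(2z+1))). Then φ is an even polynomial. -/
import Mathlib


open Polynomial

/-- For `n` even, a polynomial `φ` of degree `≤ n+1` satisfying
`φ(z) − φ(z+1) = (2z+1)ⁿ(−φ((z+1)/(2z+1)) + φ(z/(2z+1)))`
(as an identity of rational functions) is even. -/
theorem even_of_functional_equation (n : ℕ) (hn : Even n) (φ : ℂ[X])
    (hdeg : φ ∈ degreeLT ℂ (n + 2))
    (heq : ∀ z : ℂ, z ≠ -1/2 → φ.eval z - φ.eval (z + 1) =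
      (2 * z + 1) ^ n *
        (-φ.eval ((z + 1) / (2 * z + 1)) + φ.eval (z / (2 * z + 1)))) :
    ∀ z : ℂ, φ.eval (-z) = φ.eval z := by
  set ψ : ℂ[X] := φ.comp (-X) - φ with hψ
  have hψeval : ∀ z : ℂ, ψ.eval z = φ.eval (-z) - φ.eval z := by
    intro z; simp [hψ]
  have key : ∀ w : ℂ, w ≠ -1/2 →
      φ.eval (-w - 1) - φ.eval (-w) = φ.eval (w + 1) - φ.eval w := by
    intro w hw
    have hw' : (2 * w + 1 : ℂ) ≠ 0 := by
      intro h; apply hw; linear_combination h / 2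
    have h1 := heq w hw
    have hw2 : (-w - 1 : ℂ) ≠ -1/2 := by
      intro h; apply hw; linear_combination -h
    have h2 := heq (-w - 1) hw2
    rw [show (2 * (-w - 1) + 1 : ℂ) = -(2 * w + 1) by ring,
        show ((-w - 1) + 1 : ℂ) = -w by ring,
        show (-w : ℂ) / (-(2 * w + 1)) = w / (2 * w + 1) by rw [neg_div_neg_eq],
        show (-w - 1 : ℂ) / (-(2 * w + 1)) = (w + 1) / (2 * w + 1) by
          rw [show (-w - 1 : ℂ) = -(w + 1) by ring, neg_div_neg_eq],
        hn.neg_pow] at h2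
    linear_combination h1 + h2
  have hcomp : ψ.comp (X + 1) = ψ := by
    apply Polynomial.eq_of_infinite_eval_eq
    apply Set.Infinite.mono ?_ ((Set.finite_singleton (-1/2 : ℂ)).infinite_compl)
    intro x hx
    have hx' : x ≠ -1/2 := hx
    simp only [Set.mem_setOf_eq, eval_comp, eval_add, eval_X, eval_one]
    rw [hψeval, hψeval]
    have := key x hx'
    rw [show -(x + 1) = -x - 1 by ring]
    linear_combination this
  have heval : ∀ k : ℕ, ψ.eval (k : ℂ) = 0 := by
    intro k
    induction k with
    | zero => simp [hψeval]
    | succ k ih =>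
      have h := congrArg (eval (k : ℂ)) hcomp
      simp only [eval_comp, eval_add, eval_X, eval_one] at h
      push_cast
      rw [h, ih]
  have hψ0 : ψ = 0 := by
    apply Polynomial.eq_zero_of_infinite_isRoot
    apply Set.infinite_of_injective_forall_mem (f := fun k : ℕ => (k : ℂ))
    · exact fun a b hab => Nat.cast_injective hab
    · intro k; exact heval k
  intro z
  have := congrArg (eval z) hψ0
  rw [hψeval] at this
  simp at this
  linear_combination this
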